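/- arXiv:math/0505594 — 3 statements merged into one kernel-verified Lean document; each statement's English description precedes it below -/
import Mathlib

section
/- Let F be a field, let l ≥ 1, and for each j = 1, …, l let A_j and B_j be p × q_j matrices with entries in F and let w_j be a positive integer. Let C be the p × q matrix (q = q_1 + ⋯ + q_l) over the Laurent polynomial ring F[t,t⁻¹] whose j-th block of columns equals A_j·t^{w_j} + B_j, and let H be the cokernel of the F[t,t⁻¹]-linear map F[t,t⁻¹]^q → F[t,t⁻¹]^p given by the matrix C. Then the torsion submodule of H is a finite-dimensional F-vector space of dimension at most q_1·w_1 + ⋯ + q_l·w_l. -/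
set_option synthInstance.maxHeartbeats 1000000
set_option maxHeartbeats 4000000

theorem exists_coord_select {K : Type*} [Field K] {ι : Type*} [Fintype ι] :
    ∀ (r : ℕ) (V : Submodule K (ι → K)), Module.finrank K V = r →
      ∃ I : Fin r → ι, ∀ z ∈ V, (∀ i, z (I i) = 0) → z = 0 := by
  intro r
  induction r with
  | zero =>
    intro V hV
    have : V = ⊥ := Submodule.finrank_eq_zero.mp hV
    exact ⟨Fin.elim0, fun z hz _ => by simpa [this] using hz⟩
  | succ r ih =>
    intro V hV
    have hVne : V ≠ ⊥ := by
      intro h; rw [h] at hV; simp at hV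
    obtain ⟨z₀, hz₀V, hz₀⟩ := Submodule.exists_mem_ne_zero_of_ne_bot hVne
    obtain ⟨i₀, hi₀⟩ : ∃ i₀, z₀ i₀ ≠ 0 := by
      by_contra h; push_neg at h; exact hz₀ (funext h)
    set φ : V →ₗ[K] K := (LinearMap.proj i₀).comp V.subtype with hφ
    have hφrange : LinearMap.range φ = ⊤ := by
      rw [eq_top_iff]
      intro x _
      have hmem : (z₀ i₀ : K) ∈ LinearMap.range φ := ⟨⟨z₀, hz₀V⟩, rfl⟩
      have := (LinearMap.range φ).smul_mem (x * (z₀ i₀)⁻¹) hmem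
      rwa [smul_eq_mul, mul_assoc, inv_mul_cancel₀ hi₀, mul_one] at this
    have hker : Module.finrank K (LinearMap.ker φ) = r := by
      have h1 := LinearMap.finrank_range_add_finrank_ker φ
      rw [hφrange, finrank_top, hV] at h1
      have : Module.finrank K K = 1 := Module.finrank_self K
      omega
    set V' : Submodule K (ι → K) := V ⊓ LinearMap.ker (LinearMap.proj (R := K) i₀) with hV'
    have hmap : Submodule.map V.subtype (LinearMap.ker φ) = V' := by
      rw [hφ, LinearMap.ker_comp, Submodule.map_comap_subtype]
    have hV'rank : Module.finrank K V' = r := by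
      rw [← hmap, ← hker]
      exact (Submodule.equivMapOfInjective V.subtype (Submodule.injective_subtype V)
        (LinearMap.ker φ)).finrank_eq.symm
    obtain ⟨I', hI'⟩ := ih V' hV'rank
    refine ⟨Fin.cons i₀ I', fun z hzV hz => ?_⟩
    have hz0 : z i₀ = 0 := by simpa using hz 0
    have hzV' : z ∈ V' := ⟨hzV, by simpa using hz0⟩
    exact hI' z hzV' fun i => by simpa [Fin.cons_succ] using hz i.succ

theorem exists_subfamily_basis {K M : Type*} [Field K] [AddCommGroup M] [Module K M]
    [FiniteDimensional K M] {ι : Type*} (u : ι → M) :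
    ∃ (r : ℕ) (c : Fin r → ι), r = Module.finrank K (Submodule.span K (Set.range u)) ∧
      Function.Injective c ∧
      LinearIndependent K (u ∘ c) ∧
      ∀ d, u d ∈ Submodule.span K (Set.range (u ∘ c)) := by
  classical
  obtain ⟨b, hbsub, hbspan, hbind⟩ := exists_linearIndependent K (Set.range u)
  have hbfin : b.Finite := hbind.setFinite
  haveI : Fintype b := hbfin.fintype
  set r := Fintype.card b with hr
  set e : Fin r ≃ b := (Fintype.equivFin b).symm with he
  have hchoice : ∀ i : Fin r, ∃ d : ι, u d = (e i : M) := fun i => hbsub (e i).2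
  choose c hc using hchoice
  have huc : u ∘ c = fun i => (e i : M) := funext fun i => hc i
  have hcinj : Function.Injective c := by
    intro i j hij
    have : (e i : M) = (e j : M) := by rw [← hc i, ← hc j, hij]
    exact e.injective (Subtype.ext this)
  have hind : LinearIndependent K (u ∘ c) := by
    rw [huc]
    exact hbind.comp e e.injective
  have hrange : Set.range (u ∘ c) = b := by
    rw [huc]
    ext x
    constructor
    · rintro ⟨i, rfl⟩; exact (e i).2
    · intro hx; exact ⟨e.symm ⟨x, hx⟩, by simp⟩
  have hrr : r = Module.finrank K (Submodule.span K (Set.range u)) := by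
    rw [← hbspan, finrank_span_set_eq_card hbind]
    simp [hr, Set.toFinset_card]
  refine ⟨r, c, hrr, hcinj, hind, fun d => ?_⟩
  rw [hrange, hbspan]
  exact Submodule.subset_span ⟨d, rfl⟩

open LaurentPolynomial

noncomputable def lcoeff (F : Type*) [Field F] (k : ℤ) : LaurentPolynomial F →ₗ[F] F :=
  (Finsupp.lapply k).comp (AddMonoidAlgebra.coeffLinearEquiv F).toLinearMap

theorem lcoeff_T_mul {F : Type*} [Field F] (n : ℤ) (f : LaurentPolynomial F) (k : ℤ) :
    lcoeff F k (T n * f) = lcoeff F (-n + k) f := by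
  rw [show lcoeff F k (T n * f) = 1 * lcoeff F (-n + k) f from
    AddMonoidAlgebra.coeff_single_mul_apply f 1 n k, one_mul]

theorem lcoeff_single {F : Type*} [Field F] (n : ℤ) (a : F) (k : ℤ) :
    lcoeff F k (AddMonoidAlgebra.single n a : LaurentPolynomial F) = if n = k then a else 0 :=
  Finsupp.single_apply

theorem algT_eq {F : Type*} [Field F] (a : F) (n : ℤ) :
    algebraMap F (LaurentPolynomial F) a * T n = AddMonoidAlgebra.single n a := by
  rw [show (T n : LaurentPolynomial F) = AddMonoidAlgebra.single n 1 from rfl,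
    show algebraMap F (LaurentPolynomial F) a = AddMonoidAlgebra.single 0 a from rfl,
    AddMonoidAlgebra.single_mul_single]
  simp

theorem core_count {F : Type*} [Field F] (l p : ℕ) (q : Fin l → ℕ) (w : Fin l → ℕ)
    (A B : (j : Fin l) → Matrix (Fin p) (Fin (q j)) F)
    (C : Matrix (Fin p) ((j : Fin l) × Fin (q j)) (LaurentPolynomial F))
    (hC : ∀ (r : Fin p) (j : Fin l) (s : Fin (q j)),
      C r ⟨j, s⟩ = (algebraMap F (LaurentPolynomial F) (A j r s)) * T (w j)
          + algebraMap F (LaurentPolynomial F) (B j r s))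
    (m : ℕ) (x : Fin m → (Fin p → LaurentPolynomial F))
    (hxt : ∀ j, ∃ g : LaurentPolynomial F, g ≠ 0 ∧ g • x j ∈ LinearMap.range C.mulVecLin)
    (hxi : ∀ g : Fin m → F, (∑ j, g j • x j) ∈ LinearMap.range C.mulVecLin → ∀ j, g j = 0) :
    m ≤ ∑ j, q j * w j := by
  classical
  haveI : IsDomain (LaurentPolynomial F) := NoZeroDivisors.to_isDomain _
  set K := FractionRing (LaurentPolynomial F) with hK
  -- columns
  set cols : ((j : Fin l) × Fin (q j)) → (Fin p → (LaurentPolynomial F)) := fun d i => C i d with hcols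
  have hN : LinearMap.range C.mulVecLin = Submodule.span (LaurentPolynomial F) (Set.range cols) := by
    rw [Matrix.range_mulVecLin]
    congr 1
  -- the map to the fraction field
  set f : (Fin p → (LaurentPolynomial F)) →ₗ[(LaurentPolynomial F)] (Fin p → K) :=
    LinearMap.pi (fun i => (Algebra.linearMap (LaurentPolynomial F) K).comp (LinearMap.proj i)) with hf
  have hf_apply : ∀ v i, f v i = algebraMap (LaurentPolynomial F) K (v i) := fun v i => rfl
  have hf_inj : Function.Injective f := by
    intro v v' hvv'
    funext i
    exact IsFractionRing.injective (LaurentPolynomial F) K (congrFun hvv' i)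
  set u : ((j : Fin l) × Fin (q j)) → (Fin p → K) := fun d => f (cols d) with hu
  set V : Submodule K (Fin p → K) := Submodule.span K (Set.range u) with hV
  obtain ⟨r, c, hrr, hcinj, hind, hspan⟩ := exists_subfamily_basis (K := K) u
  obtain ⟨I, hI⟩ := exists_coord_select (K := K) r V hrr.symm
  set MR : Submodule (LaurentPolynomial F) (Fin p → (LaurentPolynomial F)) := Submodule.span (LaurentPolynomial F) (Set.range (cols ∘ c)) with hMR
  have hfMR : ∀ v ∈ MR, f v ∈ V := by
    intro v hv
    refine Submodule.span_induction ?_ ?_ ?_ ?_ hv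
    · rintro _ ⟨i, rfl⟩
      exact Submodule.subset_span ⟨c i, rfl⟩
    · simp only [map_zero]; exact V.zero_mem
    · intro a b _ _ ha hb
      rw [map_add]; exact V.add_mem ha hb
    · intro a v' _ hv'
      rw [map_smul]
      exact V.smul_of_tower_mem a hv'
  -- denominators
  have hρ : ∀ d, ∃ ρ : (LaurentPolynomial F), ρ ≠ 0 ∧ ρ • cols d ∈ MR := by
    intro d
    have hd := hspan d
    rw [Submodule.mem_span_range_iff_exists_fun] at hd
    obtain ⟨kk, hkk⟩ := hd
    obtain ⟨bden, hbden⟩ :=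
      IsLocalization.exist_integer_multiples (nonZeroDivisors (LaurentPolynomial F)) Finset.univ kk
    choose a ha using fun i => hbden i (Finset.mem_univ i)
    refine ⟨(bden : (LaurentPolynomial F)), mem_nonZeroDivisors_iff_ne_zero.mp bden.2, ?_⟩
    have heq : (bden : (LaurentPolynomial F)) • cols d = ∑ i, a i • cols (c i) := by
      apply hf_inj
      rw [map_smul, map_sum]
      show (bden : (LaurentPolynomial F)) • u d = _
      rw [← hkk, Finset.smul_sum]
      refine Finset.sum_congr rfl fun i _ => ?_
      rw [map_smul]
      show (bden : (LaurentPolynomial F)) • (kk i • u (c i)) = a i • u (c i)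
      rw [← smul_assoc, ← ha i]
      exact algebraMap_smul K (a i) (u (c i))
    rw [heq]
    exact Submodule.sum_mem _ fun i _ =>
      Submodule.smul_mem _ _ (Submodule.subset_span ⟨i, rfl⟩)
  choose ρfun hρne hρmem using hρ
  set ρall : (LaurentPolynomial F) := ∏ d, ρfun d with hρall
  have hρallne : ρall ≠ 0 := Finset.prod_ne_zero_iff.2 fun d _ => hρne d
  have hρallmem : ∀ d, ρall • cols d ∈ MR := by
    intro d
    have : ρall = (∏ d' ∈ Finset.univ.erase d, ρfun d') * ρfun d :=
      (Finset.prod_erase_mul Finset.univ ρfun (Finset.mem_univ d)).symm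
    rw [this, mul_smul]
    exact Submodule.smul_mem _ _ (hρmem d)
  -- annihilators of torsion lifts
  have hσj : ∀ j, ∃ σ : (LaurentPolynomial F), σ ≠ 0 ∧ σ • x j ∈ MR := by
    intro j
    obtain ⟨g, hg, hgx⟩ := hxt j
    rw [hN, Submodule.mem_span_range_iff_exists_fun] at hgx
    obtain ⟨pc, hpc⟩ := hgx
    refine ⟨ρall * g, mul_ne_zero hρallne hg, ?_⟩
    have : (ρall * g) • x j = ∑ d, pc d • (ρall • cols d) := by
      rw [mul_smul, ← hpc, Finset.smul_sum]
      exact Finset.sum_congr rfl fun d _ => smul_comm ρall (pc d) (cols d)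
    rw [this]
    exact Submodule.sum_mem _ fun d _ => Submodule.smul_mem _ _ (hρallmem d)
  choose σfun hσne hσmem using hσj
  set σ : (LaurentPolynomial F) := ∏ j, σfun j with hσdef
  have hσne0 : σ ≠ 0 := Finset.prod_ne_zero_iff.2 fun j _ => hσne j
  have hσx : ∀ j, σ • x j ∈ MR := by
    intro j
    have : σ = (∏ j' ∈ Finset.univ.erase j, σfun j') * σfun j :=
      (Finset.prod_erase_mul Finset.univ σfun (Finset.mem_univ j)).symm
    rw [this, mul_smul]
    exact Submodule.smul_mem _ _ (hσmem j)
  -- window for the torsion lifts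
  obtain ⟨m₀, n₀, hwin0⟩ : ∃ (m₀ : ℤ) (n₀ : ℕ), ∀ (j : Fin m) (i : Fin p) (k : ℤ),
      lcoeff F k (x j i) ≠ 0 → 0 ≤ k + m₀ ∧ k + m₀ < n₀ := by
    set S : Finset ℤ := insert 0 ((Finset.univ : Finset (Fin m × Fin p)).biUnion
      (fun ji => (x ji.1 ji.2).coeff.support)) with hS
    have hSne : S.Nonempty := ⟨0, Finset.mem_insert_self _ _⟩
    refine ⟨-(S.min' hSne), (S.max' hSne - S.min' hSne + 1).toNat, ?_⟩
    intro j i k hk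
    have hkS : k ∈ S := Finset.mem_insert_of_mem (Finset.mem_biUnion.2
      ⟨(j, i), Finset.mem_univ _, Finsupp.mem_support_iff.2 hk⟩)
    have h1 := S.min'_le k hkS
    have h2 := S.le_max' k hkS
    have h3 := S.min'_le _ (S.max'_mem hSne)
    constructor
    · omega
    · have h4 : ((S.max' hSne - S.min' hSne + 1).toNat : ℤ)
          = S.max' hSne - S.min' hSne + 1 := Int.toNat_of_nonneg (by omega)
      omega
  set n : ℕ := max n₀ (Finset.univ.sup w) with hn
  have hn0 : n₀ ≤ n := le_max_left _ _
  have hwn : ∀ j : Fin l, w j ≤ n := fun j =>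
    le_trans (Finset.le_sup (Finset.mem_univ j)) (le_max_right _ _)
  -- the big family
  set ιt := (Σ i : Fin r, Fin (n - w ((c i).1))) ⊕ Fin m with hιt
  set bvec : ιt → (Fin p → (LaurentPolynomial F)) := Sum.elim
    (fun s => (T (s.2 : ℤ) : (LaurentPolynomial F)) • cols (c s.1))
    (fun j => (T m₀ : (LaurentPolynomial F)) • x j) with hbvec
  set Θ : (Fin p → (LaurentPolynomial F)) →ₗ[F] (Fin r → Fin n → F) :=
    LinearMap.pi (fun i' => LinearMap.pi (fun k : Fin n =>
      (lcoeff F (k : ℤ)).comp (LinearMap.proj (R := F) (I i')))) with hΘ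
  have hΘ_apply : ∀ v i' k, Θ v i' k = lcoeff F (k : ℤ) (v (I i')) := fun v i' k => rfl
  -- linear independence of the images
  have hli : LinearIndependent F (fun i => Θ (bvec i)) := by
    rw [Fintype.linearIndependent_iff]
    intro gco hg
    set z : Fin p → (LaurentPolynomial F) := ∑ i, gco i • bvec i with hz
    have hΘz : Θ z = 0 := by
      rw [hz, map_sum]
      simpa only [map_smul] using hg
    -- window property of the generators
    have hwinb : ∀ (idx : ιt) (i : Fin p) (k : ℤ),
        lcoeff F k (bvec idx i) ≠ 0 → 0 ≤ k ∧ k < (n : ℤ) := by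
      rintro (⟨i0, kk⟩ | j) i k hk
      · have hb : bvec (Sum.inl ⟨i0, kk⟩) i
            = T (kk : ℤ) * (C i (c i0)) := rfl
        rw [hb, lcoeff_T_mul] at hk
        have hCval : C i (c i0) = AddMonoidAlgebra.single ((w ((c i0).1)) : ℤ) (A ((c i0).1) i ((c i0).2))
            + AddMonoidAlgebra.single 0 (B ((c i0).1) i ((c i0).2)) := by
          rw [show C i (c i0) = C i ⟨(c i0).1, (c i0).2⟩ from by rw [Sigma.eta],
            hC i (c i0).1 (c i0).2, algT_eq]
          rfl
        rw [hCval, map_add, lcoeff_single, lcoeff_single] at hk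
        have hkk1 : (kk : ℕ) < n - w ((c i0).1) := kk.2
        have hkk2 : w ((c i0).1) ≤ n := hwn _
        by_cases h1 : ((w ((c i0).1)) : ℤ) = -(kk : ℤ) + k
        · constructor <;> omega
        · by_cases h2 : (0 : ℤ) = -(kk : ℤ) + k
          · constructor <;> omega
          · rw [if_neg h1, if_neg h2] at hk
            simp at hk
      · have hb : bvec (Sum.inr j) i = T m₀ * (x j i) := rfl
        rw [hb, lcoeff_T_mul] at hk
        have := hwin0 j i _ hk
        constructor <;> [omega; (have := hn0; omega)]
    -- window property of z
    have hwinz : ∀ (i : Fin p) (k : ℤ), lcoeff F k (z i) ≠ 0 → 0 ≤ k ∧ k < (n : ℤ) := by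
      intro i k hk
      by_contra hcon
      apply hk
      have hzi : z i = ∑ idx, gco idx • (bvec idx i) := by
        rw [hz]
        simp [Finset.sum_apply]
      rw [hzi, map_sum]
      refine Finset.sum_eq_zero fun idx _ => ?_
      rw [map_smul]
      have : lcoeff F k (bvec idx i) = 0 := by
        by_contra h
        exact hcon (hwinb idx i k h)
      rw [this, smul_zero]
    -- the selected coordinates of z vanish
    have hzI : ∀ i', z (I i') = 0 := by
      intro i'
      refine (AddMonoidAlgebra.coeffLinearEquiv F).injective (Finsupp.ext fun k => ?_)
      show lcoeff F k (z (I i')) = 0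
      by_cases hk : 0 ≤ k ∧ k < (n : ℤ)
      · have hkn : k.toNat < n := by omega
        have h0 : Θ z i' ⟨k.toNat, hkn⟩ = 0 := by rw [hΘz]; rfl
        rw [hΘ_apply] at h0
        rwa [show ((⟨k.toNat, hkn⟩ : Fin n) : ℤ) = k by
          simp [Int.toNat_of_nonneg hk.1]] at h0
      · by_contra h
        exact hk (hwinz _ _ h)
    -- σ • z lies in MR
    have hσz : σ • z ∈ MR := by
      have hrw : σ • z = ∑ idx, gco idx • (σ • bvec idx) := by
        rw [hz, Finset.smul_sum]
        exact Finset.sum_congr rfl fun idx _ => smul_comm σ (gco idx) (bvec idx)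
      rw [hrw]
      refine Submodule.sum_mem _ fun idx _ => ?_
      have hmem : σ • bvec idx ∈ MR := by
        cases idx with
        | inl s =>
          show σ • ((T (s.2 : ℤ) : (LaurentPolynomial F)) • cols (c s.1)) ∈ MR
          exact Submodule.smul_mem _ _ (Submodule.smul_mem _ _
            (Submodule.subset_span ⟨s.1, rfl⟩))
        | inr j =>
          show σ • ((T m₀ : (LaurentPolynomial F)) • x j) ∈ MR
          rw [smul_smul, mul_comm, ← smul_smul]
          exact Submodule.smul_mem _ _ (hσx j)
      rw [← algebraMap_smul (LaurentPolynomial F) (gco idx) (σ • bvec idx)]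
      exact Submodule.smul_mem _ _ hmem
    -- conclude z = 0
    have hfz : f (σ • z) = 0 := by
      refine hI _ (hfMR _ hσz) fun i' => ?_
      rw [hf_apply]
      have : (σ • z) (I i') = σ * (z (I i')) := rfl
      rw [this, hzI i', mul_zero, map_zero]
    have hσz0 : σ • z = 0 := hf_inj (by rw [hfz, map_zero])
    have hz0 : z = 0 := by
      funext i
      have := congrFun hσz0 i
      have h2 : σ * z i = 0 := this
      rcases mul_eq_zero.1 h2 with h | h
      · exact absurd h hσne0
      · exact h
    -- split the sum
    have hzsplit : (∑ s : (Σ i : Fin r, Fin (n - w ((c i).1))), gco (Sum.inl s) • bvec (Sum.inl s))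
        + (∑ j : Fin m, gco (Sum.inr j) • bvec (Sum.inr j)) = 0 := by
      rw [← hz0, hz, Fintype.sum_sum_type]
    set zb := ∑ s : (Σ i : Fin r, Fin (n - w ((c i).1))), gco (Sum.inl s) • bvec (Sum.inl s) with hzb
    set zc := ∑ j : Fin m, gco (Sum.inr j) • bvec (Sum.inr j) with hzc
    have hzbN : zb ∈ LinearMap.range C.mulVecLin := by
      rw [hN, hzb]
      refine Submodule.sum_mem _ fun s _ => ?_
      rw [← algebraMap_smul (LaurentPolynomial F) (gco (Sum.inl s))]
      exact Submodule.smul_mem _ _ (Submodule.smul_mem _ _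
        (Submodule.subset_span ⟨c s.1, rfl⟩))
    have hzcN : zc ∈ LinearMap.range C.mulVecLin := by
      have h : zc = -zb := eq_neg_of_add_eq_zero_right hzsplit
      rw [h]
      exact Submodule.neg_mem _ hzbN
    -- rewrite zc
    have hzcT : zc = (T m₀ : (LaurentPolynomial F)) • (∑ j, gco (Sum.inr j) • x j) := by
      rw [hzc, Finset.smul_sum]
      refine Finset.sum_congr rfl fun j _ => ?_
      exact (smul_comm (T m₀ : (LaurentPolynomial F)) (gco (Sum.inr j)) (x j)).symm
    have hxN : (∑ j, gco (Sum.inr j) • x j) ∈ LinearMap.range C.mulVecLin := by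
      have h1 : (∑ j, gco (Sum.inr j) • x j)
          = (T (-m₀) : (LaurentPolynomial F)) • zc := by
        rw [hzcT, smul_smul, ← T_add]
        simp
      rw [h1]
      exact Submodule.smul_mem _ _ hzcN
    have hginr : ∀ j, gco (Sum.inr j) = 0 := hxi _ hxN
    -- now the sigma part
    have hzb0 : zb = 0 := by
      have : zc = 0 := by
        rw [hzc]
        refine Finset.sum_eq_zero fun j _ => ?_
        rw [hginr j, zero_smul]
      rw [this, add_zero] at hzsplit
      exact hzsplit
    set P : Fin r → (LaurentPolynomial F) := fun i =>
      ∑ kk : Fin (n - w ((c i).1)), algebraMap F (LaurentPolynomial F) (gco (Sum.inl ⟨i, kk⟩)) * T (kk : ℤ) with hP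
    have hzbP : zb = ∑ i, P i • cols (c i) := by
      rw [hzb, ← Finset.univ_sigma_univ, Finset.sum_sigma]
      refine Finset.sum_congr rfl fun i _ => ?_
      rw [hP, Finset.sum_smul]
      refine Finset.sum_congr rfl fun kk _ => ?_
      rw [mul_smul, algebraMap_smul]
      rfl
    have hPf : ∀ i, algebraMap (LaurentPolynomial F) K (P i) = 0 := by
      have h0 : (∑ i, (algebraMap (LaurentPolynomial F) K (P i)) • (u ∘ c) i) = 0 := by
        have : f zb = 0 := by rw [hzb0, map_zero]
        rw [hzbP, map_sum] at this
        rw [← this]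
        refine Finset.sum_congr rfl fun i _ => ?_
        rw [map_smul, algebraMap_smul]
        rfl
      exact fun i => (Fintype.linearIndependent_iff.mp hind _ h0) i
    have hP0 : ∀ i, P i = 0 := fun i =>
      IsFractionRing.injective (LaurentPolynomial F) K (by rw [hPf i, map_zero])
    -- extract the coefficients
    intro idx
    cases idx with
    | inl s =>
      obtain ⟨i, kk⟩ := s
      have h1 : lcoeff F (kk : ℤ) (P i) = gco (Sum.inl ⟨i, kk⟩) := by
        rw [hP, map_sum]
        have h2 : ∀ kk' : Fin (n - w ((c i).1)),
            lcoeff F (kk : ℤ) (algebraMap F (LaurentPolynomial F) (gco (Sum.inl ⟨i, kk'⟩)) * T (kk' : ℤ))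
              = if kk' = kk then gco (Sum.inl ⟨i, kk'⟩) else 0 := by
          intro kk'
          rw [algT_eq, lcoeff_single]
          congr 1
          simp [Fin.ext_iff]
        rw [Finset.sum_congr rfl fun kk' _ => h2 kk']
        simp
      rw [← h1, hP0 i, map_zero]
    | inr j => exact hginr j
  -- the count
  have hcard := hli.fintype_card_le_finrank
  have hfr : Module.finrank F (Fin r → Fin n → F) = r * n := by
    rw [Module.finrank_pi_fintype]
    simp [Module.finrank_pi, Finset.sum_const, Finset.card_univ]
  have hcardι : Fintype.card ιt = (∑ i : Fin r, (n - w ((c i).1))) + m := by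
    simp [hιt, Fintype.card_sigma]
  have hsum : (∑ i : Fin r, (n - w ((c i).1))) + (∑ i : Fin r, w ((c i).1)) = r * n := by
    rw [← Finset.sum_add_distrib]
    have : ∀ i : Fin r, (n - w ((c i).1)) + w ((c i).1) = n := fun i =>
      Nat.sub_add_cancel (hwn _)
    simp [this, Finset.sum_const, Finset.card_univ, mul_comm]
  have hwsum : (∑ i : Fin r, w ((c i).1)) ≤ ∑ j, q j * w j := by
    have h1 : (∑ d ∈ Finset.univ.image c, w d.1) = ∑ i : Fin r, w ((c i).1) :=
      Finset.sum_image (fun a _ b _ h => hcinj h)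
    have h2 : (∑ d ∈ Finset.univ.image c, w d.1) ≤ ∑ d : ((j : Fin l) × Fin (q j)), w d.1 :=
      Finset.sum_le_sum_of_subset (Finset.subset_univ _)
    have h3 : (∑ d : ((j : Fin l) × Fin (q j)), w d.1) = ∑ j, q j * w j := by
      rw [← Finset.univ_sigma_univ, Finset.sum_sigma]
      exact Finset.sum_congr rfl fun j _ => by
        simp [Finset.sum_const, Finset.card_univ, mul_comm]
    omega
  rw [hfr, hcardι] at hcard
  omega

theorem torsion_of_coker_block_matrix_finite_dimensional
    {F : Type*} [Field F] (l p : ℕ) (hl : 1 ≤ l) (q : Fin l → ℕ) (w : Fin l → ℕ)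
    (hw : ∀ j, 0 < w j)
    (A B : (j : Fin l) → Matrix (Fin p) (Fin (q j)) F)
    (C : Matrix (Fin p) ((j : Fin l) × Fin (q j)) (LaurentPolynomial F))
    (hC : ∀ (r : Fin p) (j : Fin l) (s : Fin (q j)),
      C r ⟨j, s⟩ = (algebraMap F (LaurentPolynomial F) (A j r s)) * T (w j)
          + algebraMap F (LaurentPolynomial F) (B j r s)) :
    FiniteDimensional F
      ((Submodule.torsion (LaurentPolynomial F)
        ((Fin p → LaurentPolynomial F) ⧸ LinearMap.range C.mulVecLin)).restrictScalars F)
    ∧ Module.finrank F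
        ((Submodule.torsion (LaurentPolynomial F)
          ((Fin p → LaurentPolynomial F) ⧸ LinearMap.range C.mulVecLin)).restrictScalars F)
        ≤ ∑ j, q j * w j := by
  classical
  haveI : IsDomain (LaurentPolynomial F) := NoZeroDivisors.to_isDomain _
  set TF := (Submodule.torsion (LaurentPolynomial F)
    ((Fin p → LaurentPolynomial F) ⧸ LinearMap.range C.mulVecLin)).restrictScalars F with hTF
  have key : ∀ s : Finset ↥TF, (LinearIndependent F fun i : s => (i : ↥TF)) →
      s.card ≤ ∑ j, q j * w j := by
    intro s hs
    set e : Fin s.card ≃ ↥s :=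
      ((Fintype.equivFin ↥s).trans (finCongr (Fintype.card_coe s))).symm with he
    set y : Fin s.card → ↥TF := fun i => ((e i : ↥s) : ↥TF) with hy
    have hyli : LinearIndependent F y := hs.comp e e.injective
    have hlift : ∀ i, ∃ v : Fin p → LaurentPolynomial F,
        (Submodule.Quotient.mk v : (Fin p → LaurentPolynomial F)
            ⧸ LinearMap.range C.mulVecLin)
          = ((y i : ↥TF) : (Fin p → LaurentPolynomial F) ⧸ LinearMap.range C.mulVecLin) :=
      fun i => Submodule.Quotient.mk_surjective (LinearMap.range C.mulVecLin) _
    choose xv hxv using hlift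
    have hxt : ∀ i, ∃ g : LaurentPolynomial F, g ≠ 0 ∧
        g • xv i ∈ LinearMap.range C.mulVecLin := by
      intro i
      have hmem : ((y i : ↥TF) : (Fin p → LaurentPolynomial F)
          ⧸ LinearMap.range C.mulVecLin) ∈ Submodule.torsion (LaurentPolynomial F)
          ((Fin p → LaurentPolynomial F) ⧸ LinearMap.range C.mulVecLin) := by
        have h := (y i).2
        rwa [Submodule.restrictScalars_mem] at h
      obtain ⟨a, ha⟩ := (Submodule.mem_torsion_iff _).mp hmem
      refine ⟨(a : LaurentPolynomial F), mem_nonZeroDivisors_iff_ne_zero.mp a.2, ?_⟩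
      rw [← Submodule.Quotient.mk_eq_zero]
      rw [Submodule.Quotient.mk_smul, hxv i]
      exact ha
    have hxi : ∀ g : Fin s.card → F,
        (∑ i, g i • xv i) ∈ LinearMap.range C.mulVecLin → ∀ i, g i = 0 := by
      intro g hgmem
      have h0 : (∑ i, g i • ((y i : ↥TF) : (Fin p → LaurentPolynomial F)
          ⧸ LinearMap.range C.mulVecLin)) = 0 := by
        rw [← Submodule.Quotient.mk_eq_zero] at hgmem
        rw [← hgmem]
        rw [show Submodule.Quotient.mk (∑ i, g i • xv i)
            = (LinearMap.range C.mulVecLin).mkQ (∑ i, g i • xv i) from rfl]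
        rw [map_sum]
        refine Finset.sum_congr rfl fun i _ => ?_
        rw [show ((LinearMap.range C.mulVecLin).mkQ) (g i • xv i)
          = Submodule.Quotient.mk (g i • xv i) from rfl, Submodule.Quotient.mk_smul, hxv i]
      have h1 : (∑ i, g i • y i) = 0 := by
        apply Submodule.injective_subtype TF
        rw [map_sum, map_zero]
        simp only [map_smul]
        exact h0
      exact Fintype.linearIndependent_iff.mp hyli g h1
    exact core_count l p q w A B C hC s.card xv hxt hxi
  have hrank : Module.rank F ↥TF ≤ (∑ j, q j * w j : ℕ) := rank_le key
  haveI hfin : Module.Finite F ↥TF := by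
    rw [← Module.rank_lt_aleph0_iff]
    exact lt_of_le_of_lt hrank (Cardinal.nat_lt_aleph0 _)
  exact ⟨hfin, Module.finrank_le_of_rank_le hrank⟩
end

section
/- Let F be a field, let A and B be invertible n × n matrices over F, let w_1, …, w_n be positive integers, and let D be the diagonal n × n matrix over the polynomial ring F[t] with diagonal entries t^{w_1}, …, t^{w_n}. Then the polynomial det(A·D + B) ∈ F[t] has constant coefficient equal to det(B), coefficient of t^{w_1 + ⋯ + w_n} equal to det(A), and degree exactly w_1 + ⋯ + w_n. -/
open Polynomial Matrix

private lemma det_expansion {F : Type*} [Field F] (n : ℕ)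
    (A B : Matrix (Fin n) (Fin n) F) (w : Fin n → ℕ) :
    (A.map Polynomial.C * Matrix.diagonal (fun i => (X : F[X]) ^ (w i)) + B.map Polynomial.C).det
    = ∑ s : Finset (Fin n), X ^ (∑ j ∈ s, w j) *
        C (Matrix.det (Matrix.of fun j i => if j ∈ s then A i j else B i j)) := by
  set a : Fin n → Fin n → F[X] := fun j i => C (A i j) with ha
  set b : Fin n → Fin n → F[X] := fun j i => C (B i j) with hb
  have hMT : (A.map Polynomial.C * Matrix.diagonal (fun i => (X : F[X]) ^ (w i)) + B.map Polynomial.C)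
      = (Matrix.of ((fun j => (X:F[X])^(w j) • a j) + b))ᵀ := by
    ext i j : 1
    simp only [Matrix.add_apply, Matrix.mul_apply, Matrix.map_apply, Matrix.diagonal_apply,
      Matrix.transpose_apply, Matrix.of_apply, Pi.add_apply, Pi.smul_apply, smul_eq_mul]
    rw [Finset.sum_eq_single j]
    · rw [if_pos rfl]; ring
    · intro k _ hk; simp [hk]
    · simp
  rw [hMT, ← Matrix.det_transpose, Matrix.transpose_transpose]
  set f := (Matrix.detRowAlternating (R := F[X]) (n := Fin n)).toMultilinearMap with hf
  have h1 : Matrix.det (Matrix.of ((fun j => (X:F[X])^(w j) • a j) + b))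
      = f ((fun j => (X:F[X])^(w j) • a j) + b) := rfl
  rw [h1, MultilinearMap.map_add_univ]
  apply Finset.sum_congr rfl
  intro s _
  have h2 : s.piecewise (fun j => (X:F[X])^(w j) • a j) b
      = s.piecewise (fun j => (X:F[X])^(w j) • (s.piecewise a b) j) (s.piecewise a b) := by
    ext j i
    by_cases hj : j ∈ s <;> simp [Finset.piecewise, hj]
  rw [h2, f.map_piecewise_smul]
  have h3 : f (s.piecewise a b)
      = C (Matrix.det (Matrix.of fun j i => if j ∈ s then A i j else B i j)) := by
    have h4 : Matrix.of (s.piecewise a b)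
        = (Matrix.of fun j i => if j ∈ s then A i j else B i j).map C := by
      ext j i
      by_cases hj : j ∈ s <;> simp [a, b, Finset.piecewise, hj]
    show Matrix.det (Matrix.of (s.piecewise a b)) = _
    rw [h4]
    exact (RingHom.map_det C _).symm
  rw [h3, smul_eq_mul, Finset.prod_pow_eq_pow_sum]

theorem det_mul_diagonal_pow_add
    {F : Type*} [Field F] (n : ℕ) (A B : Matrix (Fin n) (Fin n) F)
    (hA : IsUnit A) (hB : IsUnit B) (w : Fin n → ℕ) (hw : ∀ i, 0 < w i) :
    (Matrix.det (A.map Polynomial.C * Matrix.diagonal (fun i => (X : F[X]) ^ (w i))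
        + B.map Polynomial.C)).coeff 0 = B.det
    ∧ (Matrix.det (A.map Polynomial.C * Matrix.diagonal (fun i => (X : F[X]) ^ (w i))
        + B.map Polynomial.C)).coeff (∑ i, w i) = A.det
    ∧ (Matrix.det (A.map Polynomial.C * Matrix.diagonal (fun i => (X : F[X]) ^ (w i))
        + B.map Polynomial.C)).degree = ((∑ i, w i : ℕ) : WithBot ℕ) := by
  have key := det_expansion n A B w
  set c : Finset (Fin n) → F := fun s =>
    Matrix.det (Matrix.of fun j i => if j ∈ s then A i j else B i j) with hc
  have hcB : c ∅ = B.det := by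
    rw [hc]
    simp only [Finset.notMem_empty, if_false]
    rw [← Matrix.det_transpose B]
    rfl
  have hcA : c Finset.univ = A.det := by
    rw [hc]
    simp only [Finset.mem_univ, if_true]
    rw [← Matrix.det_transpose A]
    rfl
  have hcoeff : ∀ (s : Finset (Fin n)) (m : ℕ),
      (X ^ (∑ j ∈ s, w j) * C (c s)).coeff m
        = if m = ∑ j ∈ s, w j then c s else 0 := by
    intro s m
    rw [mul_comm, coeff_C_mul, coeff_X_pow]
    split <;> simp
  -- coefficient 0
  have h0 : (Matrix.det (A.map Polynomial.C * Matrix.diagonal (fun i => (X : F[X]) ^ (w i))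
      + B.map Polynomial.C)).coeff 0 = B.det := by
    rw [key, finset_sum_coeff, Finset.sum_eq_single ∅]
    · rw [hcoeff]; simpa using hcB
    · intro s _ hs
      rw [hcoeff, if_neg]
      obtain ⟨i, hi⟩ := Finset.nonempty_iff_ne_empty.mpr hs
      intro h
      have : 0 < ∑ j ∈ s, w j := Finset.sum_pos (fun j _ => hw j) ⟨i, hi⟩
      omega
    · simp
  -- sums over proper subsets are smaller
  have hlt : ∀ s : Finset (Fin n), s ≠ Finset.univ → ∑ j ∈ s, w j < ∑ i, w i := by
    intro s hs
    obtain ⟨i, hi⟩ : ∃ i, i ∉ s := by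
      by_contra h
      push_neg at h
      exact hs (Finset.eq_univ_iff_forall.mpr h)
    exact Finset.sum_lt_sum_of_subset (Finset.subset_univ s) (Finset.mem_univ i) hi (hw i)
      (fun j _ _ => Nat.zero_le _)
  -- top coefficient
  have htop : (Matrix.det (A.map Polynomial.C * Matrix.diagonal (fun i => (X : F[X]) ^ (w i))
      + B.map Polynomial.C)).coeff (∑ i, w i) = A.det := by
    rw [key, finset_sum_coeff, Finset.sum_eq_single Finset.univ]
    · rw [hcoeff, if_pos rfl, hcA]
    · intro s _ hs
      rw [hcoeff, if_neg (by have := hlt s hs; omega)]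
    · simp
  refine ⟨h0, htop, ?_⟩
  have hAne : A.det ≠ 0 :=
    ((Matrix.isUnit_iff_isUnit_det A).mp hA).ne_zero
  have hle : (Matrix.det (A.map Polynomial.C * Matrix.diagonal (fun i => (X : F[X]) ^ (w i))
      + B.map Polynomial.C)).degree ≤ ((∑ i, w i : ℕ) : WithBot ℕ) := by
    rw [key]
    refine (Polynomial.degree_sum_le _ _).trans ?_
    apply Finset.sup_le
    intro s _
    refine (Polynomial.degree_mul_le _ _).trans ?_
    calc ((X : F[X]) ^ (∑ j ∈ s, w j)).degree + (C (c s)).degree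
        ≤ ((∑ j ∈ s, w j : ℕ) : WithBot ℕ) + 0 := by
          gcongr
          · exact degree_X_pow_le _
          · exact degree_C_le
      _ ≤ ((∑ i, w i : ℕ) : WithBot ℕ) := by
          rw [add_zero]
          exact_mod_cast Finset.sum_le_sum_of_subset (Finset.subset_univ s)
  exact Polynomial.degree_eq_of_le_of_coeff_ne_zero hle (htop ▸ hAne)
end

section
/- Let F be a field and let J be an invertible b × b matrix over F. Consider the F[t,t⁻¹]-linear endomorphism of F[t,t⁻¹]^b given by the matrix t·I_b − J (where I_b is the identity matrix and J is regarded as a matrix over F[t,t⁻¹]). Then the cokernel of this map is a finite-dimensional F-vector space of dimension exactly b. -/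
open LaurentPolynomial Matrix

namespace CokerAux

variable {F : Type*} [Field F] {b : ℕ}

noncomputable def ev (J : Matrix (Fin b) (Fin b) F) (hJ : IsUnit J) :
    LaurentPolynomial F →ₐ[F] Matrix (Fin b) (Fin b) F :=
  AddMonoidAlgebra.lift F _ ℤ ((Units.coeHom _).comp (zpowersHom _ hJ.unit))

lemma ev_T (J : Matrix (Fin b) (Fin b) F) (hJ : IsUnit J) (n : ℤ) :
    ev J hJ (T n) =
      ((hJ.unit ^ n : (Matrix (Fin b) (Fin b) F)ˣ) : Matrix (Fin b) (Fin b) F) := by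
  rw [ev, T, AddMonoidAlgebra.lift_single]
  simp [zpowersHom_apply]

lemma ev_T_one (J : Matrix (Fin b) (Fin b) F) (hJ : IsUnit J) :
    ev J hJ (T 1) = J := by
  rw [ev_T, zpow_one, IsUnit.unit_spec]

lemma ev_comm (J : Matrix (Fin b) (Fin b) F) (hJ : IsUnit J) (p : LaurentPolynomial F) :
    J * ev J hJ p = ev J hJ p * J := by
  have h := (Commute.all (T 1 : LaurentPolynomial F) p).map (ev J hJ)
  rw [ev_T_one] at h
  exact h

/-- The evaluation-at-`J` map `F[t,t⁻¹]^b → F^b`, `v ↦ ∑ₙ Jⁿ vₙ`. -/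
noncomputable def phi (J : Matrix (Fin b) (Fin b) F) (hJ : IsUnit J) :
    (Fin b → LaurentPolynomial F) →ₗ[F] (Fin b → F) where
  toFun v := fun i => ∑ j, ev J hJ (v j) i j
  map_add' u v := by
    funext i
    simp [Matrix.add_apply, Finset.sum_add_distrib]
  map_smul' c v := by
    funext i
    simp [Matrix.smul_apply, Finset.mul_sum, smul_eq_mul]

lemma phi_apply (J : Matrix (Fin b) (Fin b) F) (hJ : IsUnit J) (v : Fin b → LaurentPolynomial F)
    (i : Fin b) : phi J hJ v i = ∑ j, ev J hJ (v j) i j := rfl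

lemma phi_surjective (J : Matrix (Fin b) (Fin b) F) (hJ : IsUnit J) :
    Function.Surjective (phi J hJ) := by
  intro w
  refine ⟨fun j => algebraMap F _ (w j), ?_⟩
  funext i
  simp only [phi_apply, AlgHom.commutes]
  simp [Algebra.algebraMap_eq_smul_one, Matrix.smul_apply, Matrix.one_apply]

section N

variable (J : Matrix (Fin b) (Fin b) F) (hJ : IsUnit J)

noncomputable abbrev Jm : Matrix (Fin b) (Fin b) (LaurentPolynomial F) :=
  J.map (algebraMap F (LaurentPolynomial F))

noncomputable abbrev Mt : Matrix (Fin b) (Fin b) (LaurentPolynomial F) :=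
  (T 1 : LaurentPolynomial F) • (1 : Matrix (Fin b) (Fin b) (LaurentPolynomial F)) - Jm J

noncomputable abbrev N : Submodule (LaurentPolynomial F) (Fin b → LaurentPolynomial F) :=
  LinearMap.range (Matrix.mulVecLin (Mt J))

lemma basic_mem (w : Fin b → LaurentPolynomial F) :
    (T 1 : LaurentPolynomial F) • w - Jm J *ᵥ w ∈ N J := by
  refine ⟨w, ?_⟩
  simp [Matrix.mulVecLin_apply, Matrix.sub_mulVec, Matrix.smul_mulVec,
    Matrix.one_mulVec]

lemma Jm_comm : Jm J * Mt J = Mt J * Jm J := by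
  simp only [Mt, mul_sub, sub_mul, Matrix.mul_smul, Matrix.smul_mul, mul_one, one_mul]

lemma mulVec_mem {x : Fin b → LaurentPolynomial F} (hx : x ∈ N J) :
    Jm J *ᵥ x ∈ N J := by
  obtain ⟨w, rfl⟩ := hx
  refine ⟨Jm J *ᵥ w, ?_⟩
  simp only [Matrix.mulVecLin_apply, Matrix.mulVec_mulVec, Jm_comm]

lemma smul_T_mem_iff {x : Fin b → LaurentPolynomial F} :
    (T 1 : LaurentPolynomial F) • x ∈ N J ↔ x ∈ N J := by
  constructor
  · intro h
    have h2 := (N J).smul_mem (T (-1)) h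
    rwa [smul_smul, ← T_add, neg_add_cancel, T_zero, one_smul] at h2
  · exact fun h => (N J).smul_mem _ h

noncomputable abbrev U : (Matrix (Fin b) (Fin b) (LaurentPolynomial F))ˣ :=
  Units.map (RingHom.mapMatrix (algebraMap F (LaurentPolynomial F))).toMonoidHom hJ.unit

lemma U_coe : ((U J hJ : _ˣ) : Matrix (Fin b) (Fin b) (LaurentPolynomial F)) = Jm J := by
  simp [U, Jm]

lemma U_succ (n : ℤ) : ((U J hJ ^ (n + 1) : _ˣ) :
    Matrix (Fin b) (Fin b) (LaurentPolynomial F)) = Jm J * ((U J hJ ^ n : _ˣ) :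
    Matrix (Fin b) (Fin b) (LaurentPolynomial F)) := by
  rw [show n + 1 = 1 + n by ring, _root_.zpow_one_add, Units.val_mul, U_coe]

lemma key (n : ℤ) (u : Fin b → LaurentPolynomial F) :
    (T n : LaurentPolynomial F) • u - ((U J hJ ^ n : _ˣ) :
      Matrix (Fin b) (Fin b) (LaurentPolynomial F)) *ᵥ u ∈ N J := by
  induction n using Int.induction_on with
  | zero => simp
  | succ k ih =>
    have h1 : (T (k + 1 : ℤ) : LaurentPolynomial F) • u =
        (T 1 : LaurentPolynomial F) • ((T (k : ℤ) : LaurentPolynomial F) • u) := by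
      rw [smul_smul, ← T_add, add_comm]
    have h2 : ((U J hJ ^ ((k : ℤ) + 1) : _ˣ) :
        Matrix (Fin b) (Fin b) (LaurentPolynomial F)) *ᵥ u =
        Jm J *ᵥ (((U J hJ ^ (k : ℤ) : _ˣ) :
          Matrix (Fin b) (Fin b) (LaurentPolynomial F)) *ᵥ u) := by
      rw [Matrix.mulVec_mulVec, U_succ]
    rw [h1, h2]
    have e : (T 1 : LaurentPolynomial F) • ((T (k : ℤ) : LaurentPolynomial F) • u) -
        Jm J *ᵥ (((U J hJ ^ (k : ℤ) : _ˣ) : Matrix _ _ (LaurentPolynomial F)) *ᵥ u) =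
        ((T 1 : LaurentPolynomial F) • ((T (k : ℤ) : LaurentPolynomial F) • u) -
          Jm J *ᵥ ((T (k : ℤ) : LaurentPolynomial F) • u)) +
        Jm J *ᵥ ((T (k : ℤ) : LaurentPolynomial F) • u -
          ((U J hJ ^ (k : ℤ) : _ˣ) : Matrix _ _ (LaurentPolynomial F)) *ᵥ u) := by
      rw [Matrix.mulVec_sub]; abel
    rw [e]
    exact (N J).add_mem (basic_mem J _) (mulVec_mem J ih)
  | pred k ih =>
    rw [← smul_T_mem_iff J]
    have h1 : (T 1 : LaurentPolynomial F) •
        ((T (-(k : ℤ) - 1) : LaurentPolynomial F) • u -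
          ((U J hJ ^ (-(k : ℤ) - 1) : _ˣ) : Matrix _ _ (LaurentPolynomial F)) *ᵥ u) =
        ((T (-(k : ℤ)) : LaurentPolynomial F) • u -
          ((U J hJ ^ (-(k : ℤ)) : _ˣ) : Matrix _ _ (LaurentPolynomial F)) *ᵥ u) +
        (((U J hJ ^ (-(k : ℤ)) : _ˣ) : Matrix _ _ (LaurentPolynomial F)) *ᵥ u -
          (T 1 : LaurentPolynomial F) •
            (((U J hJ ^ (-(k : ℤ) - 1) : _ˣ) : Matrix _ _ (LaurentPolynomial F)) *ᵥ u)) := by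
      rw [smul_sub, smul_smul, ← T_add, show (1 : ℤ) + (-(k : ℤ) - 1) = -(k : ℤ) by ring]
      abel
    rw [h1]
    refine (N J).add_mem ih ?_
    have h2 : ((U J hJ ^ (-(k : ℤ)) : _ˣ) : Matrix _ _ (LaurentPolynomial F)) *ᵥ u =
        Jm J *ᵥ (((U J hJ ^ (-(k : ℤ) - 1) : _ˣ) : Matrix _ _ (LaurentPolynomial F)) *ᵥ u) := by
      rw [Matrix.mulVec_mulVec, show -(k : ℤ) = (-(k : ℤ) - 1) + 1 by ring, U_succ]
      ring_nf
    rw [h2, ← neg_sub]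
    exact (N J).neg_mem (basic_mem J _)

end N

section Ker

variable (J : Matrix (Fin b) (Fin b) F) (hJ : IsUnit J)

lemma ev_algebraMap_mul (c : F) (p : LaurentPolynomial F) :
    ev J hJ (algebraMap F (LaurentPolynomial F) c * p) = c • ev J hJ p := by
  rw [_root_.map_mul, AlgHom.commutes, ← Algebra.smul_def]

lemma phi_T_smul (u : Fin b → LaurentPolynomial F) :
    phi J hJ ((T 1 : LaurentPolynomial F) • u) = J *ᵥ phi J hJ u := by
  funext i
  simp only [phi_apply, Pi.smul_apply, smul_eq_mul, _root_.map_mul, ev_T_one, Matrix.mulVec,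
    Matrix.mul_apply, dotProduct]
  rw [Finset.sum_comm]
  simp [Finset.mul_sum]

lemma phi_Jm_mulVec (u : Fin b → LaurentPolynomial F) :
    phi J hJ (Jm J *ᵥ u) = J *ᵥ phi J hJ u := by
  funext i
  have step : ∀ k, ∑ j, J j k * ev J hJ (u k) i j = ∑ m, J i m * ev J hJ (u k) m k := by
    intro k
    have h := congrFun (congrFun (ev_comm J hJ (u k)) i) k
    rw [Matrix.mul_apply, Matrix.mul_apply] at h
    rw [show (∑ j, J j k * ev J hJ (u k) i j) = ∑ j, ev J hJ (u k) i j * J j k from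
      Finset.sum_congr rfl fun j _ => mul_comm _ _, ← h]
  calc phi J hJ (Jm J *ᵥ u) i
      = ∑ j, ∑ k, J j k * ev J hJ (u k) i j := by
        simp only [phi_apply, Matrix.mulVec, dotProduct, Jm, Matrix.map_apply, map_sum,
          ev_algebraMap_mul, Matrix.sum_apply, Matrix.smul_apply, smul_eq_mul]
    _ = ∑ k, ∑ j, J j k * ev J hJ (u k) i j := Finset.sum_comm
    _ = ∑ k, ∑ m, J i m * ev J hJ (u k) m k := Finset.sum_congr rfl fun k _ => step k
    _ = ∑ m, J i m * ∑ k, ev J hJ (u k) m k := by rw [Finset.sum_comm]; simp [Finset.mul_sum]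
    _ = (J *ᵥ phi J hJ u) i := by simp [Matrix.mulVec, dotProduct, phi_apply]

lemma phi_of_mem_N {x : Fin b → LaurentPolynomial F} (hx : x ∈ N J) :
    phi J hJ x = 0 := by
  obtain ⟨u, rfl⟩ := hx
  rw [Matrix.mulVecLin_apply]
  have : Mt J *ᵥ u = (T 1 : LaurentPolynomial F) • u - Jm J *ᵥ u := by
    simp [Matrix.sub_mulVec, Matrix.smul_mulVec, Matrix.one_mulVec]
  rw [this, map_sub, phi_T_smul, phi_Jm_mulVec, sub_self]

lemma U_zpow_coe (n : ℤ) :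
    ((U J hJ ^ n : _ˣ) : Matrix (Fin b) (Fin b) (LaurentPolynomial F)) =
      ((hJ.unit ^ n : _ˣ) : Matrix (Fin b) (Fin b) F).map (algebraMap F (LaurentPolynomial F)) := by
  rw [U, ← map_zpow]
  rfl

lemma phi_single_T (j : Fin b) (n : ℤ) :
    phi J hJ (Pi.single j (T n)) =
      fun i => ((hJ.unit ^ n : _ˣ) : Matrix (Fin b) (Fin b) F) i j := by
  funext i
  rw [phi_apply, Finset.sum_eq_single j]
  · rw [Pi.single_eq_same, ev_T]
  · intro k _ hk
    rw [Pi.single_eq_of_ne hk, map_zero, Matrix.zero_apply]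
  · simp

lemma main_claim (v : Fin b → LaurentPolynomial F) :
    v - (fun j => algebraMap F (LaurentPolynomial F) (phi J hJ v j)) ∈ N J := by
  let ψ : (Fin b → LaurentPolynomial F) →ₗ[F] (Fin b → LaurentPolynomial F) :=
    LinearMap.id -
      (LinearMap.compLeft (Algebra.linearMap F (LaurentPolynomial F)) (Fin b)).comp (phi J hJ)
  have hψ : ∀ w, ψ w = w - fun j => algebraMap F (LaurentPolynomial F) (phi J hJ w j) :=
    fun w => rfl
  suffices h : ∀ w, w ∈ Submodule.comap ψ ((N J).restrictScalars F) by
    have hv := h v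
    rwa [Submodule.mem_comap, hψ, Submodule.restrictScalars_mem] at hv
  intro w
  have hw : w = ∑ j, Pi.single j (w j) := (Finset.univ_sum_single w).symm
  rw [hw]
  refine Submodule.sum_mem _ fun j _ => ?_
  generalize w j = p
  induction p using LaurentPolynomial.induction_on' with
  | add p q hp hq =>
    have : (Pi.single j (p + q) : Fin b → LaurentPolynomial F) =
        Pi.single j p + Pi.single j q := by
      rw [Pi.single_add]
    rw [this]
    exact Submodule.add_mem _ hp hq
  | C_mul_T n a =>
    have hsm : (Pi.single j (C a * T n) : Fin b → LaurentPolynomial F) =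
        a • (Pi.single j (T n : LaurentPolynomial F) : Fin b → LaurentPolynomial F) := by
      rw [← Pi.single_smul, Algebra.smul_def]
      simp [LaurentPolynomial.algebraMap_apply]
    rw [hsm]
    refine Submodule.smul_mem _ _ ?_
    rw [Submodule.mem_comap, hψ, Submodule.restrictScalars_mem, phi_single_T]
    have hk := key J hJ n (Pi.single j (1 : LaurentPolynomial F))
    have e1 : (T n : LaurentPolynomial F) •
        (Pi.single j (1 : LaurentPolynomial F) : Fin b → LaurentPolynomial F) =
        (Pi.single j (T n : LaurentPolynomial F) : Fin b → LaurentPolynomial F) := by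
      funext k
      by_cases hkj : k = j
      · subst hkj; simp
      · simp [Pi.single_eq_of_ne hkj]
    have e2 : ((U J hJ ^ n : _ˣ) : Matrix (Fin b) (Fin b) (LaurentPolynomial F)) *ᵥ
        Pi.single j (1 : LaurentPolynomial F) =
        fun i => algebraMap F (LaurentPolynomial F)
          (((hJ.unit ^ n : _ˣ) : Matrix (Fin b) (Fin b) F) i j) := by
      rw [Matrix.mulVec_single, U_zpow_coe]
      funext i
      simp [Matrix.map_apply]
    rwa [e1, e2] at hk

lemma ker_eq : LinearMap.ker (phi J hJ) = (N J).restrictScalars F := by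
  ext v
  rw [LinearMap.mem_ker, Submodule.restrictScalars_mem]
  constructor
  · intro hv
    have h := main_claim J hJ v
    rw [hv] at h
    simp only [Pi.zero_apply, map_zero] at h
    rwa [show (fun _ : Fin b => (0 : LaurentPolynomial F)) = 0 from rfl, sub_zero] at h
  · exact phi_of_mem_N J hJ

end Ker

end CokerAux

theorem finrank_coker_t_sub_J
    {F : Type*} [Field F] (b : ℕ) (J : Matrix (Fin b) (Fin b) F) (hJ : IsUnit J) :
    FiniteDimensional F
      ((Fin b → LaurentPolynomial F) ⧸
        LinearMap.range (Matrix.mulVecLin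
          ((T 1 : LaurentPolynomial F) • (1 : Matrix (Fin b) (Fin b) (LaurentPolynomial F))
            - J.map (algebraMap F (LaurentPolynomial F)))))
    ∧ Module.finrank F
      ((Fin b → LaurentPolynomial F) ⧸
        LinearMap.range (Matrix.mulVecLin
          ((T 1 : LaurentPolynomial F) • (1 : Matrix (Fin b) (Fin b) (LaurentPolynomial F))
            - J.map (algebraMap F (LaurentPolynomial F))))) = b := by
  let e : ((Fin b → LaurentPolynomial F) ⧸ CokerAux.N J) ≃ₗ[F] (Fin b → F) :=
    ((Submodule.Quotient.restrictScalarsEquiv F (CokerAux.N J)).symm.trans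
      (Submodule.quotEquivOfEq _ _ (CokerAux.ker_eq J hJ).symm)).trans
      ((CokerAux.phi J hJ).quotKerEquivOfSurjective (CokerAux.phi_surjective J hJ))
  constructor
  · exact Module.Finite.equiv e.symm
  · rw [e.finrank_eq, Module.finrank_fin_fun]
end
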